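/- Let H be a Hopf algebra over a commutative ring k, with comultiplication Δ(h) = Σ h₁⊗h₂, counit ε and antipode S, and let t ∈ H be a left integral, i.e. h·t = ε(h)t for all h ∈ H. Then R := Σ t₁ ⊗ S(t₂) = (I_H ⊗ S)(Δ(t)) ∈ H⊗H is H-central: (h⊗1)·R = R·(1⊗h) in H⊗H for all h ∈ H. Consequently R is a solution of the FS-equation R¹²R²³ = R²³R¹³ = R¹³R¹² in H⊗H⊗H, and hence of the braid equation R¹²R²³R¹² = R²³R¹²R²³. -/

import Mathlib

open TensorProduct

variable {k H : Type*} [CommRing k] [Ring H] [HopfAlgebra k H]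

/-- The map `H ⊗ H → H ⊗ H ⊗ H`, `x ⊗ y ↦ x ⊗ y ⊗ 1`. -/
noncomputable def leg12 : H ⊗[k] H →ₐ[k] H ⊗[k] (H ⊗[k] H) :=
  Algebra.TensorProduct.map (AlgHom.id k H) Algebra.TensorProduct.includeLeft

/-- The map `H ⊗ H → H ⊗ H ⊗ H`, `x ⊗ y ↦ x ⊗ 1 ⊗ y`. -/
noncomputable def leg13 : H ⊗[k] H →ₐ[k] H ⊗[k] (H ⊗[k] H) :=
  Algebra.TensorProduct.map (AlgHom.id k H) Algebra.TensorProduct.includeRight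

/-- The map `H ⊗ H → H ⊗ H ⊗ H`, `x ⊗ y ↦ 1 ⊗ x ⊗ y`. -/
noncomputable def leg23 : H ⊗[k] H →ₐ[k] H ⊗[k] (H ⊗[k] H) :=
  Algebra.TensorProduct.includeRight

noncomputable def PhiMap (k H : Type*) [CommRing k] [Ring H] [HopfAlgebra k H] :
    H ⊗[k] H →ₗ[k] H ⊗[k] H :=
  LinearMap.mul' k (H ⊗[k] H) ∘ₗ
    TensorProduct.map Coalgebra.comul (TensorProduct.mk k H H 1)

noncomputable def PsiMap (k H : Type*) [CommRing k] [Ring H] [HopfAlgebra k H] :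
    H ⊗[k] H →ₗ[k] H ⊗[k] H :=
  LinearMap.mul' k (H ⊗[k] H) ∘ₗ
    TensorProduct.map
      ((TensorProduct.map LinearMap.id (HopfAlgebra.antipode (R := k))) ∘ₗ Coalgebra.comul)
      (TensorProduct.mk k H H 1)

lemma PhiMap_tmul (x y : H) :
    PhiMap k H (x ⊗ₜ[k] y) = Coalgebra.comul (R := k) x * ((1 : H) ⊗ₜ[k] y) := by
  simp [PhiMap, LinearMap.mul'_apply]

lemma PsiMap_tmul (x y : H) :
    PsiMap k H (x ⊗ₜ[k] y) =
      (TensorProduct.map LinearMap.id (HopfAlgebra.antipode (R := k)))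
        (Coalgebra.comul (R := k) x) * ((1 : H) ⊗ₜ[k] y) := by
  simp [PsiMap, LinearMap.mul'_apply]

lemma helper2 (x : H) {ι : Type*} (r : Coalgebra.Repr k x ι) :
    ∑ i ∈ r.index, Coalgebra.comul (R := k) (r.left i) *
      ((1 : H) ⊗ₜ[k] HopfAlgebra.antipode (R := k) (r.right i)) = x ⊗ₜ[k] (1 : H) := by
  classical
  set S : H →ₗ[k] H := HopfAlgebra.antipode (R := k) with hS
  let a₁ : ∀ i : ι, Coalgebra.Repr k (r.left i) (H × H) := fun i => Coalgebra.Repr.arbitrary k (r.left i)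
  let a₂ : ∀ i : ι, Coalgebra.Repr k (r.right i) (H × H) := fun i => Coalgebra.Repr.arbitrary k (r.right i)
  have key := Coalgebra.sum_tmul_tmul_eq r a₁ a₂
  let F : H ⊗[k] (H ⊗[k] H) →ₗ[k] H ⊗[k] H :=
    TensorProduct.map LinearMap.id
      (LinearMap.mul' k H ∘ₗ TensorProduct.map LinearMap.id S)
  have key2 := congrArg F key
  simp only [map_sum, F, TensorProduct.map_tmul, LinearMap.id_apply, LinearMap.coe_comp,
    Function.comp_apply, LinearMap.mul'_apply] at key2
  calc ∑ i ∈ r.index, Coalgebra.comul (R := k) (r.left i) * ((1 : H) ⊗ₜ[k] S (r.right i))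
      = ∑ i ∈ r.index, ∑ j ∈ (a₁ i).index,
          (a₁ i).left j ⊗ₜ[k] ((a₁ i).right j * S (r.right i)) := by
        refine Finset.sum_congr rfl fun i _ => ?_
        rw [← (a₁ i).eq, Finset.sum_mul]
        simp [Algebra.TensorProduct.tmul_mul_tmul]
    _ = ∑ i ∈ r.index, ∑ j ∈ (a₂ i).index,
          r.left i ⊗ₜ[k] ((a₂ i).left j * S ((a₂ i).right j)) := key2
    _ = ∑ i ∈ r.index, r.left i ⊗ₜ[k] algebraMap k H (Coalgebra.counit (R := k) (r.right i)) := by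
        refine Finset.sum_congr rfl fun i _ => ?_
        rw [← TensorProduct.tmul_sum, HopfAlgebra.sum_mul_antipode_eq_algebraMap_counit (a₂ i)]
    _ = x ⊗ₜ[k] (1 : H) := by
        have h := congrArg (TensorProduct.map (LinearMap.id (R := k) (M := H))
          (Algebra.linearMap k H)) (Coalgebra.sum_tmul_counit_eq r)
        simp only [map_sum, TensorProduct.map_tmul, LinearMap.id_apply,
          Algebra.linearMap_apply, map_one] at h
        exact h

lemma helper1 (x y : H) {ι : Type*} (r : Coalgebra.Repr k x ι) :
    ∑ i ∈ r.index,
      (TensorProduct.map LinearMap.id (HopfAlgebra.antipode (R := k)))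
        (Coalgebra.comul (R := k) (r.left i)) * ((1 : H) ⊗ₜ[k] (r.right i * y))
      = x ⊗ₜ[k] y := by
  classical
  set S : H →ₗ[k] H := HopfAlgebra.antipode (R := k) with hS
  let a₁ : ∀ i : ι, Coalgebra.Repr k (r.left i) (H × H) := fun i => Coalgebra.Repr.arbitrary k (r.left i)
  let a₂ : ∀ i : ι, Coalgebra.Repr k (r.right i) (H × H) := fun i => Coalgebra.Repr.arbitrary k (r.right i)
  have key := Coalgebra.sum_tmul_tmul_eq r a₁ a₂
  let F : H ⊗[k] (H ⊗[k] H) →ₗ[k] H ⊗[k] H :=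
    TensorProduct.map LinearMap.id
      (LinearMap.mul' k H ∘ₗ TensorProduct.map S (LinearMap.mulRight k y))
  have key2 := congrArg F key
  simp only [map_sum, F, TensorProduct.map_tmul, LinearMap.id_apply, LinearMap.coe_comp,
    Function.comp_apply, LinearMap.mul'_apply, LinearMap.mulRight_apply] at key2
  calc ∑ i ∈ r.index,
      (TensorProduct.map LinearMap.id S) (Coalgebra.comul (R := k) (r.left i)) *
        ((1 : H) ⊗ₜ[k] (r.right i * y))
      = ∑ i ∈ r.index, ∑ j ∈ (a₁ i).index,
          (a₁ i).left j ⊗ₜ[k] (S ((a₁ i).right j) * (r.right i * y)) := by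
        refine Finset.sum_congr rfl fun i _ => ?_
        rw [← (a₁ i).eq, map_sum, Finset.sum_mul]
        simp [Algebra.TensorProduct.tmul_mul_tmul]
    _ = ∑ i ∈ r.index, ∑ j ∈ (a₂ i).index,
          r.left i ⊗ₜ[k] (S ((a₂ i).left j) * ((a₂ i).right j * y)) := key2
    _ = ∑ i ∈ r.index, r.left i ⊗ₜ[k] (Coalgebra.counit (R := k) (r.right i) • y) := by
        refine Finset.sum_congr rfl fun i _ => ?_
        rw [← TensorProduct.tmul_sum]
        congr 1
        calc ∑ j ∈ (a₂ i).index, S ((a₂ i).left j) * ((a₂ i).right j * y)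
            = (∑ j ∈ (a₂ i).index, S ((a₂ i).left j) * (a₂ i).right j) * y := by
              rw [Finset.sum_mul]; simp [mul_assoc]
          _ = Coalgebra.counit (R := k) (r.right i) • y := by
              rw [HopfAlgebra.sum_antipode_mul_eq_algebraMap_counit (a₂ i), ← Algebra.smul_def]
    _ = x ⊗ₜ[k] y := by
        have h := congrArg (TensorProduct.map (LinearMap.id (R := k) (M := H))
          (LinearMap.toSpanSingleton k H y)) (Coalgebra.sum_tmul_counit_eq r)
        simp only [map_sum, TensorProduct.map_tmul, LinearMap.id_apply,
          LinearMap.toSpanSingleton_apply, one_smul] at h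
        exact h

lemma PsiMap_PhiMap (z : H ⊗[k] H) : PsiMap k H (PhiMap k H z) = z := by
  have hmap : (PsiMap k H) ∘ₗ (PhiMap k H) = LinearMap.id := by
    apply TensorProduct.ext'
    intro x y
    simp only [LinearMap.comp_apply, LinearMap.id_apply, PhiMap_tmul]
    set r := Coalgebra.Repr.arbitrary k x with hr
    rw [← r.eq, Finset.sum_mul]
    simp only [Algebra.TensorProduct.tmul_mul_tmul, one_mul, mul_one]
    rw [map_sum]
    simp only [PsiMap_tmul]
    exact helper1 x y r
  exact LinearMap.congr_fun hmap z

lemma central_aux (t : H)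
    (ht : ∀ h : H, h * t = (Coalgebra.counit (R := k) h) • t) (h : H) :
    (h ⊗ₜ[k] (1 : H)) *
        (TensorProduct.map LinearMap.id (HopfAlgebra.antipode (R := k)))
          (Coalgebra.comul (R := k) t)
      = (TensorProduct.map LinearMap.id (HopfAlgebra.antipode (R := k)))
          (Coalgebra.comul (R := k) t) * ((1 : H) ⊗ₜ[k] h) := by
  classical
  set S : H →ₗ[k] H := HopfAlgebra.antipode (R := k) with hS
  set Rt : H ⊗[k] H :=
    (TensorProduct.map LinearMap.id S) (Coalgebra.comul (R := k) t) with hRtdef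
  set r := Coalgebra.Repr.arbitrary k t with hr
  have hRt : Rt = ∑ i ∈ r.index, r.left i ⊗ₜ[k] S (r.right i) := by
    rw [hRtdef, ← r.eq, map_sum]
    simp only [TensorProduct.map_tmul, LinearMap.id_apply]
  have hL : (h ⊗ₜ[k] (1 : H)) * Rt = ∑ i ∈ r.index, (h * r.left i) ⊗ₜ[k] S (r.right i) := by
    rw [hRt, Finset.mul_sum]
    simp only [Algebra.TensorProduct.tmul_mul_tmul, one_mul]
  have hPhi : PhiMap k H ((h ⊗ₜ[k] (1 : H)) * Rt) = t ⊗ₜ[k] h := by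
    rw [hL, map_sum]
    simp only [PhiMap_tmul]
    calc ∑ i ∈ r.index, Coalgebra.comul (R := k) (h * r.left i) * ((1 : H) ⊗ₜ[k] S (r.right i))
        = Coalgebra.comul (R := k) h *
            ∑ i ∈ r.index, Coalgebra.comul (R := k) (r.left i) * ((1 : H) ⊗ₜ[k] S (r.right i)) := by
          rw [Finset.mul_sum]
          refine Finset.sum_congr rfl fun i _ => ?_
          rw [Bialgebra.comul_mul, mul_assoc]
      _ = Coalgebra.comul (R := k) h * (t ⊗ₜ[k] (1 : H)) := by rw [helper2 t r]
      _ = t ⊗ₜ[k] h := by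
          set s := Coalgebra.Repr.arbitrary k h with hs
          rw [← s.eq, Finset.sum_mul]
          simp only [Algebra.TensorProduct.tmul_mul_tmul, mul_one]
          simp_rw [ht]
          have h2 := congrArg (TensorProduct.map (LinearMap.toSpanSingleton k H t)
            (LinearMap.id (R := k) (M := H))) (Coalgebra.sum_counit_tmul_eq s)
          simp only [map_sum, TensorProduct.map_tmul, LinearMap.id_apply,
            LinearMap.toSpanSingleton_apply, one_smul] at h2
          simpa using h2
  calc (h ⊗ₜ[k] (1 : H)) * Rt
      = PsiMap k H (PhiMap k H ((h ⊗ₜ[k] (1 : H)) * Rt)) := (PsiMap_PhiMap _).symm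
    _ = PsiMap k H (t ⊗ₜ[k] h) := by rw [hPhi]
    _ = Rt * ((1 : H) ⊗ₜ[k] h) := by rw [PsiMap_tmul, ← hRtdef]

lemma leg12_tmul (x y : H) : (leg12 (x ⊗ₜ[k] y) : H ⊗[k] (H ⊗[k] H)) = x ⊗ₜ[k] (y ⊗ₜ[k] 1) := by
  simp [leg12]

lemma leg13_tmul (x y : H) : (leg13 (x ⊗ₜ[k] y) : H ⊗[k] (H ⊗[k] H)) = x ⊗ₜ[k] ((1 : H) ⊗ₜ[k] y) := by
  simp [leg13]

lemma leg23_tmul (x y : H) : (leg23 (x ⊗ₜ[k] y) : H ⊗[k] (H ⊗[k] H)) = (1 : H) ⊗ₜ[k] (x ⊗ₜ[k] y) := by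
  simp [leg23]

lemma fs_aux {R : H ⊗[k] H}
    (hc : ∀ h : H, (h ⊗ₜ[k] (1 : H)) * R = R * ((1 : H) ⊗ₜ[k] h)) :
    (leg12 R * leg23 R = leg23 R * leg13 R) ∧ (leg23 R * leg13 R = leg13 R * leg12 R) := by
  classical
  obtain ⟨s, hs⟩ := TensorProduct.exists_finset (R := k) R
  have e12 : (leg12 R : H ⊗[k] (H ⊗[k] H)) = ∑ p ∈ s, p.1 ⊗ₜ[k] (p.2 ⊗ₜ[k] 1) := by
    rw [hs, map_sum]; exact Finset.sum_congr rfl fun p _ => leg12_tmul p.1 p.2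
  have e13 : (leg13 R : H ⊗[k] (H ⊗[k] H)) = ∑ p ∈ s, p.1 ⊗ₜ[k] ((1 : H) ⊗ₜ[k] p.2) := by
    rw [hs, map_sum]; exact Finset.sum_congr rfl fun p _ => leg13_tmul p.1 p.2
  have e23 : (leg23 R : H ⊗[k] (H ⊗[k] H)) = ∑ p ∈ s, (1 : H) ⊗ₜ[k] (p.1 ⊗ₜ[k] p.2) := by
    rw [hs, map_sum]; exact Finset.sum_congr rfl fun p _ => leg23_tmul p.1 p.2
  -- the common middle value
  have h2313 : leg23 R * leg13 R
      = ∑ q ∈ s, ∑ p ∈ s, q.1 ⊗ₜ[k] (p.1 ⊗ₜ[k] (p.2 * q.2)) := by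
    rw [e23, e13, Finset.sum_mul_sum]
    rw [Finset.sum_comm]
    refine Finset.sum_congr rfl fun q _ => Finset.sum_congr rfl fun p _ => ?_
    simp [Algebra.TensorProduct.tmul_mul_tmul]
  have key : ∀ b : H, ∑ p ∈ s, (b * p.1) ⊗ₜ[k] p.2 = ∑ p ∈ s, p.1 ⊗ₜ[k] (p.2 * b) := by
    intro b
    have h1 : (b ⊗ₜ[k] (1 : H)) * R = ∑ p ∈ s, (b * p.1) ⊗ₜ[k] p.2 := by
      rw [hs, Finset.mul_sum]
      simp [Algebra.TensorProduct.tmul_mul_tmul]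
    have h2 : R * ((1 : H) ⊗ₜ[k] b) = ∑ p ∈ s, p.1 ⊗ₜ[k] (p.2 * b) := by
      rw [hs, Finset.sum_mul]
      simp [Algebra.TensorProduct.tmul_mul_tmul]
    rw [← h1, ← h2, hc b]
  constructor
  · rw [h2313, e12, e23, Finset.sum_mul_sum]
    have lhs_eq : ∑ p ∈ s, ∑ q ∈ s,
        (p.1 ⊗ₜ[k] (p.2 ⊗ₜ[k] (1:H))) * ((1:H) ⊗ₜ[k] (q.1 ⊗ₜ[k] q.2))
        = ∑ p ∈ s, ∑ q ∈ s, p.1 ⊗ₜ[k] ((p.2 * q.1) ⊗ₜ[k] q.2) := by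
      refine Finset.sum_congr rfl fun p _ => Finset.sum_congr rfl fun q _ => ?_
      simp [Algebra.TensorProduct.tmul_mul_tmul]
    rw [lhs_eq]
    refine Finset.sum_congr rfl fun p _ => ?_
    have h3 := congrArg (fun z : H ⊗[k] H => p.1 ⊗ₜ[k] z) (key p.2)
    simpa [TensorProduct.tmul_sum] using h3
  · rw [h2313, e13, e12, Finset.sum_mul_sum]
    -- RHS: ∑ p ∑ q, (p.1 * q.1) ⊗ (q.2 ⊗ p.2)
    have rhs_eq : ∑ p ∈ s, ∑ q ∈ s,
        (p.1 ⊗ₜ[k] ((1:H) ⊗ₜ[k] p.2)) * (q.1 ⊗ₜ[k] (q.2 ⊗ₜ[k] (1:H)))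
        = ∑ p ∈ s, ∑ q ∈ s, (p.1 * q.1) ⊗ₜ[k] (q.2 ⊗ₜ[k] p.2) := by
      refine Finset.sum_congr rfl fun p _ => Finset.sum_congr rfl fun q _ => ?_
      simp [Algebra.TensorProduct.tmul_mul_tmul]
    rw [rhs_eq]
    -- use associator to move between groupings
    have assoc_eq : ∀ X : (H ⊗[k] H) ⊗[k] H,
        (Algebra.TensorProduct.assoc k k k H H H) X =
          (Algebra.TensorProduct.assoc k k k H H H) X := fun _ => rfl
    -- compute via the associator
    have main : ∑ p ∈ s, ∑ q ∈ s, (p.1 * q.1) ⊗ₜ[k] (q.2 ⊗ₜ[k] p.2)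
        = ∑ q ∈ s, ∑ p ∈ s, q.1 ⊗ₜ[k] (p.1 ⊗ₜ[k] (p.2 * q.2)) := by
      have step1 : ∀ p : H × H, ∑ q ∈ s, (p.1 * q.1) ⊗ₜ[k] (q.2 ⊗ₜ[k] p.2)
          = ∑ q ∈ s, q.1 ⊗ₜ[k] ((q.2 * p.1) ⊗ₜ[k] p.2) := by
        intro p
        have := congrArg (fun z => (TensorProduct.assoc k H H H) (z ⊗ₜ[k] p.2)) (key p.1)
        simpa [TensorProduct.sum_tmul, map_sum] using this
      calc ∑ p ∈ s, ∑ q ∈ s, (p.1 * q.1) ⊗ₜ[k] (q.2 ⊗ₜ[k] p.2)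
          = ∑ p ∈ s, ∑ q ∈ s, q.1 ⊗ₜ[k] ((q.2 * p.1) ⊗ₜ[k] p.2) := by
            exact Finset.sum_congr rfl fun p _ => step1 p
        _ = ∑ q ∈ s, ∑ p ∈ s, q.1 ⊗ₜ[k] ((q.2 * p.1) ⊗ₜ[k] p.2) := Finset.sum_comm
        _ = ∑ q ∈ s, ∑ p ∈ s, q.1 ⊗ₜ[k] (p.1 ⊗ₜ[k] (p.2 * q.2)) := by
            refine Finset.sum_congr rfl fun q _ => ?_
            have := congrArg (fun z => q.1 ⊗ₜ[k] z) (key q.2)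
            simpa [TensorProduct.tmul_sum, TensorProduct.sum_tmul] using this
    exact main.symm

/-- If `t` is a left integral in a Hopf algebra `H`, then
`R = Σ t₁ ⊗ S(t₂)` is `H`-central, hence a solution of the FS-equation, and
hence of the braid equation. -/
theorem integral_gives_central_element (t : H)
    (ht : ∀ h : H, h * t = (Coalgebra.counit (R := k) h) • t) :
    ∀ R : H ⊗[k] H,
      R = (TensorProduct.map LinearMap.id (HopfAlgebra.antipode (R := k)))
            (Coalgebra.comul (R := k) t) →
      (∀ h : H, (h ⊗ₜ[k] (1 : H)) * R = R * ((1 : H) ⊗ₜ[k] h)) ∧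
      (leg12 R * leg23 R = leg23 R * leg13 R ∧
        leg23 R * leg13 R = leg13 R * leg12 R) ∧
      (leg12 R * leg23 R * leg12 R = leg23 R * leg12 R * leg23 R) := by
  intro R hR
  have hc : ∀ h : H, (h ⊗ₜ[k] (1 : H)) * R = R * ((1 : H) ⊗ₜ[k] h) := by
    intro h
    rw [hR]
    exact central_aux t ht h
  obtain ⟨e1, e2⟩ := fs_aux hc
  refine ⟨hc, ⟨e1, e2⟩, ?_⟩
  calc leg12 R * leg23 R * leg12 R
      = leg23 R * leg13 R * leg12 R := by rw [e1]
    _ = leg23 R * (leg13 R * leg12 R) := mul_assoc _ _ _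
    _ = leg23 R * (leg23 R * leg13 R) := by rw [← e2]
    _ = leg23 R * (leg12 R * leg23 R) := by rw [← e1]
    _ = leg23 R * leg12 R * leg23 R := (mul_assoc _ _ _).symm
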